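/- Let A be a finite-dimensional simple ℝ-algebra and let τ be a ring involution of A (a ring automorphism with τ∘τ = id). Let G = ℤ/2 act on A via τ. Then the twisted group ring A⋊G is a semisimple ring. -/

import Mathlib

set_option linter.unusedSectionVars false

noncomputable section

namespace Paper

variable (A : Type*) [Ring A] (G : Type*) [Group G] [MulSemiringAction G A]

/-- The twisted group ring (crossed product) `A⋊G`: the free left `A`-module with basis `G`,
with multiplication determined by `(a·g)(b·h) = (a * g(b))·(gh)`. -/
def CrossedProduct : Type _ := G →₀ A

namespace CrossedProduct

instance : AddCommGroup (CrossedProduct A G) := inferInstanceAs (AddCommGroup (G →₀ A))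

instance {k : Type*} [Semiring k] [Module k A] : Module k (CrossedProduct A G) :=
  inferInstanceAs (Module k (G →₀ A))

variable {A G}

/-- The element `a·g` of the crossed product. -/
def single (g : G) (a : A) : CrossedProduct A G := Finsupp.single g a

theorem single_add (g : G) (a b : A) :
    (single g (a + b) : CrossedProduct A G) = single g a + single g b :=
  Finsupp.single_add g a b

theorem single_zero (g : G) : (single g 0 : CrossedProduct A G) = 0 :=
  Finsupp.single_zero g

theorem induction_linear {p : CrossedProduct A G → Prop} (f : CrossedProduct A G)
    (h0 : p 0) (hadd : ∀ f g, p f → p g → p (f + g)) (hsingle : ∀ (g : G) (a : A), p (single g a)) :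
    p f :=
  Finsupp.induction_linear f h0 hadd hsingle

noncomputable instance : Mul (CrossedProduct A G) :=
  ⟨fun f h => Finsupp.sum (f : G →₀ A) fun g a =>
    Finsupp.sum (h : G →₀ A) fun g' b => Finsupp.single (g * g') (a * g • b)⟩

theorem mul_def (f h : CrossedProduct A G) :
    f * h = Finsupp.sum (f : G →₀ A) fun g a =>
      Finsupp.sum (h : G →₀ A) fun g' b =>
        (single (g * g') (a * g • b) : CrossedProduct A G) := rfl

noncomputable instance : One (CrossedProduct A G) := ⟨single 1 1⟩

theorem one_def : (1 : CrossedProduct A G) = single 1 1 := rfl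

private theorem mul_zero' (f : CrossedProduct A G) : f * 0 = 0 := by
  revert f
  show ∀ f : G →₀ A, (Finsupp.sum f fun g a => Finsupp.sum (0 : G →₀ A) fun g' b =>
    (Finsupp.single (g * g') (a * g • b) : G →₀ A)) = 0
  simp

private theorem zero_mul' (f : CrossedProduct A G) : 0 * f = 0 :=
  Finsupp.sum_zero_index

private theorem mul_add' (f h k : CrossedProduct A G) : f * (h + k) = f * h + f * k := by
  revert f h k
  show ∀ f h k : G →₀ A, (Finsupp.sum f fun g a => Finsupp.sum (h + k) fun g' b =>
    (Finsupp.single (g * g') (a * g • b) : G →₀ A)) =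
    (Finsupp.sum f fun g a => Finsupp.sum h fun g' b =>
      (Finsupp.single (g * g') (a * g • b) : G →₀ A)) +
    (Finsupp.sum f fun g a => Finsupp.sum k fun g' b =>
      (Finsupp.single (g * g') (a * g • b) : G →₀ A))
  intro f h k
  rw [← Finsupp.sum_add]
  refine Finsupp.sum_congr fun g _ => ?_
  rw [Finsupp.sum_add_index' (fun g' => by simp) (fun g' b c => by simp [mul_add, smul_add, Finsupp.single_add])]

private theorem add_mul' (f h k : CrossedProduct A G) : (f + h) * k = f * k + h * k := by
  revert f h k
  show ∀ f h k : G →₀ A, (Finsupp.sum (f + h) fun g a => Finsupp.sum k fun g' b =>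
    (Finsupp.single (g * g') (a * g • b) : G →₀ A)) =
    (Finsupp.sum f fun g a => Finsupp.sum k fun g' b =>
      (Finsupp.single (g * g') (a * g • b) : G →₀ A)) +
    (Finsupp.sum h fun g a => Finsupp.sum k fun g' b =>
      (Finsupp.single (g * g') (a * g • b) : G →₀ A))
  intro f h k
  rw [Finsupp.sum_add_index' (fun g => by simp) (fun g a b => ?_)]
  rw [← Finsupp.sum_add]
  refine Finsupp.sum_congr fun g' _ => ?_
  simp [add_mul, Finsupp.single_add]

theorem single_mul_single (g g' : G) (a b : A) :
    (single g a * single g' b : CrossedProduct A G) = single (g * g') (a * g • b) := by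
  show (Finsupp.sum (Finsupp.single g a : G →₀ A) fun g a =>
    Finsupp.sum (Finsupp.single g' b : G →₀ A) fun g' b =>
      (Finsupp.single (g * g') (a * g • b) : G →₀ A)) = Finsupp.single (g * g') (a * g • b)
  rw [Finsupp.sum_single_index (by simp), Finsupp.sum_single_index (by simp)]

private theorem one_mul' (f : CrossedProduct A G) : 1 * f = f := by
  induction f using induction_linear with
  | h0 => exact mul_zero' 1
  | hadd f g hf hg => rw [mul_add', hf, hg]
  | hsingle g a => rw [one_def, single_mul_single, one_mul, one_smul, one_mul]

private theorem mul_one' (f : CrossedProduct A G) : f * 1 = f := by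
  induction f using induction_linear with
  | h0 => exact zero_mul' 1
  | hadd f g hf hg => rw [add_mul', hf, hg]
  | hsingle g a => rw [one_def, single_mul_single, mul_one, smul_one, mul_one]

private theorem mul_assoc' (f h k : CrossedProduct A G) : f * h * k = f * (h * k) := by
  induction f using induction_linear with
  | h0 => rw [zero_mul', zero_mul', zero_mul']
  | hadd f₁ f₂ h₁ h₂ => rw [add_mul', add_mul', add_mul', h₁, h₂]
  | hsingle g a =>
    induction h using induction_linear with
    | h0 => rw [mul_zero', zero_mul', mul_zero']
    | hadd h₁ h₂ ih₁ ih₂ => rw [mul_add', add_mul', ih₁, ih₂, add_mul', mul_add']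
    | hsingle g' b =>
      induction k using induction_linear with
      | h0 => rw [mul_zero', mul_zero', mul_zero']
      | hadd k₁ k₂ ih₁ ih₂ => rw [mul_add', ih₁, ih₂, mul_add', mul_add']
      | hsingle g'' c =>
        rw [single_mul_single, single_mul_single, single_mul_single, single_mul_single,
          mul_assoc, mul_smul, smul_mul', mul_assoc]

noncomputable instance : Ring (CrossedProduct A G) :=
  { (inferInstanceAs (AddCommGroup (CrossedProduct A G)) : AddCommGroup (CrossedProduct A G)),
    (inferInstanceAs (Mul (CrossedProduct A G)) : Mul (CrossedProduct A G)),
    (inferInstanceAs (One (CrossedProduct A G)) : One (CrossedProduct A G)) with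
    left_distrib := mul_add'
    right_distrib := add_mul'
    zero_mul := zero_mul'
    mul_zero := mul_zero'
    mul_assoc := mul_assoc'
    one_mul := one_mul'
    mul_one := mul_one' }

/-- The canonical inclusion of `A` into the crossed product `A⋊G`. -/
noncomputable def ι : A →+* CrossedProduct A G where
  toFun a := single 1 a
  map_one' := rfl
  map_mul' a b := by rw [single_mul_single, one_mul, one_smul]
  map_zero' := single_zero 1
  map_add' a b := single_add 1 a b

end CrossedProduct

end Paper

end


private theorem aux_simple_artinian_isSemisimpleRing (B : Type*) [Ring B]
    [IsSimpleRing B] [IsArtinian B B] : IsSemisimpleRing B := by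
  classical
  set S : Set (Submodule B B) := {m | IsSimpleModule B m} with hSdef
  suffices h : sSup S = ⊤ from IsSemisimpleModule.of_sSup_simples_eq_top h
  have hmul : ∀ {x y : B}, x ∈ sSup S → x * y ∈ sSup S := by
    intro x y hx
    let f : B →ₗ[B] B :=
      { toFun := fun z => z * y
        map_add' := fun a b => add_mul a b y
        map_smul' := fun a b => mul_assoc a b y }
    have hle : Submodule.map f (sSup S) ≤ sSup S := by
      have heq : Submodule.map f (sSup S) = ⨆ m : S, Submodule.map f m.1 := by
        rw [sSup_eq_iSup', Submodule.map_iSup]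
      rw [heq]
      refine iSup_le fun m => ?_
      haveI : IsSimpleModule B m.1 := m.2
      let g := f.comp m.1.subtype
      have hrange : Submodule.map f m.1 = LinearMap.range g := by
        rw [LinearMap.range_comp, Submodule.range_subtype]
      rcases eq_bot_or_eq_top (LinearMap.ker g) with hk | hk
      · haveI : IsSimpleModule B (LinearMap.range g) :=
          IsSimpleModule.congr (LinearEquiv.ofInjective g (LinearMap.ker_eq_bot.1 hk)).symm
        rw [hrange]
        exact le_sSup (show IsSimpleModule B (LinearMap.range g) from this)
      · have hg : g = 0 := LinearMap.ker_eq_top.1 hk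
        rw [hrange, hg, LinearMap.range_zero]
        exact bot_le
    exact hle (Submodule.mem_map_of_mem hx)
  have hnbot : sSup S ≠ ⊥ := by
    haveI : IsAtomic (Submodule B B) :=
      isAtomic_of_orderBot_wellFounded_lt (IsWellFounded.wf)
    obtain ⟨m, hm⟩ := IsAtomic.exists_atom (Submodule B B)
    intro h
    have hmS : m ∈ S := show IsSimpleModule B m from isSimpleModule_iff_isAtom.2 hm
    have : m ≤ (⊥ : Submodule B B) := h ▸ le_sSup hmS
    exact hm.1 (le_bot_iff.1 this)
  obtain ⟨x, hxmem, hxne⟩ := Submodule.exists_mem_ne_zero_of_ne_bot hnbot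
  haveI : Ideal.IsTwoSided (sSup S) := ⟨fun _ hx => hmul hx⟩
  let T : TwoSidedIdeal B := Ideal.toTwoSided (sSup S)
  haveI : IsSimpleOrder (TwoSidedIdeal B) := IsSimpleRing.simple
  rcases eq_bot_or_eq_top T with h | h
  · exfalso
    have : x ∈ T := Ideal.mem_toTwoSided.2 hxmem
    rw [h] at this
    exact hxne ((TwoSidedIdeal.mem_bot B).1 this)
  · rw [eq_top_iff]
    intro z _
    have : z ∈ T := h ▸ TwoSidedIdeal.mem_top B
    exact Ideal.mem_toTwoSided.1 this

open Paper CrossedProduct in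
private theorem aux_crossed (A : Type*) [Ring A] [Algebra ℝ A] [FiniteDimensional ℝ A]
    [IsSimpleRing A] (G : Type*) [Group G] [MulSemiringAction G A]
    (u0 : G) (hu0 : u0 * u0 = 1) (hgen : ∀ g : G, g = 1 ∨ g = u0) :
    IsSemisimpleRing (CrossedProduct A G) := by
  classical
  haveI : IsArtinianRing A := IsArtinianRing.of_finite ℝ A
  haveI : IsSemisimpleRing A := aux_simple_artinian_isSemisimpleRing A
  have hsmul : ∀ (a : A) (x : CrossedProduct A G), a • x = ι a * x := by
    intro a x
    induction x using induction_linear with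
    | h0 => rw [smul_zero, mul_zero]
    | hadd f g hf hg => rw [smul_add, mul_add, hf, hg]
    | hsingle g b =>
      have h1 : (ι a : CrossedProduct A G) * single g b = single g (a * b) := by
        show (single 1 a : CrossedProduct A G) * single g b = single g (a * b)
        rw [single_mul_single, one_mul, one_smul]
      rw [h1]
      show a • (Finsupp.single g b : G →₀ A) = Finsupp.single g (a * b)
      rw [Finsupp.smul_single, smul_eq_mul]
  haveI : IsScalarTower A (CrossedProduct A G) (CrossedProduct A G) := by
    refine ⟨fun a s t => ?_⟩
    show (a • s) * t = a • (s * t)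
    rw [hsmul, hsmul, mul_assoc]
  refine { exists_isCompl := fun N => ?_ }
  obtain ⟨Q, hQ⟩ := exists_isCompl (Submodule.restrictScalars A N)
  set proj := Submodule.linearProjOfIsCompl _ Q hQ with hproj
  set π : CrossedProduct A G →ₗ[A] CrossedProduct A G :=
    (Submodule.restrictScalars A N).subtype ∘ₗ proj with hπdef
  have hπmem : ∀ x, π x ∈ N := fun x => (proj x).2
  have hπid : ∀ n ∈ N, π n = n := by
    intro n hn
    have h := Submodule.linearProjOfIsCompl_apply_left hQ
      (⟨n, hn⟩ : Submodule.restrictScalars A N)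
    show ((proj n : Submodule.restrictScalars A N) : CrossedProduct A G) = n
    exact congrArg Subtype.val h
  have hπsmul : ∀ (a : A) (x : CrossedProduct A G), π (ι a * x) = ι a * π x := by
    intro a x
    rw [← hsmul, ← hsmul, map_smul]
  set b : A := algebraMap ℝ A 2⁻¹ with hbdef
  set c : CrossedProduct A G := ι b with hcdef
  set u : CrossedProduct A G := single u0 (1 : A) with hudef
  have h2A : (algebraMap ℝ A) 2 = (2 : A) := map_ofNat _ 2
  have hb2 : b * 2 = 1 := by
    rw [hbdef, ← h2A, ← map_mul, inv_mul_cancel₀ two_ne_zero, map_one]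
  have h2b : (2 : A) * b = 1 := by
    rw [hbdef, ← h2A, ← map_mul, mul_inv_cancel₀ two_ne_zero, map_one]
  have huu : u * u = 1 := by
    rw [hudef, single_mul_single, hu0, smul_one, mul_one, one_def]
  have hsmul2 : u0 • (2 : A) = 2 := by
    rw [show (2 : A) = 1 + 1 from one_add_one_eq_two.symm, smul_add, smul_one]
  have hub : u0 • b = b := by
    have h1 : (2 : A) * (u0 • b) = 1 := by
      rw [← hsmul2, ← smul_mul', h2b, smul_one]
    calc u0 • b = (b * 2) * (u0 • b) := by rw [hb2, one_mul]
      _ = b * ((2 : A) * (u0 • b)) := by rw [mul_assoc]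
      _ = b := by rw [h1, mul_one]
  have hcu : c * u = u * c := by
    rw [hcdef, hudef]
    show (single 1 b : CrossedProduct A G) * single u0 1
      = single u0 (1 : A) * single 1 b
    rw [single_mul_single, single_mul_single, one_mul, mul_one, one_smul, mul_one,
      one_mul, hub]
  have hca : ∀ a : A, c * ι a = ι a * c := by
    intro a
    rw [hcdef, ← map_mul, ← map_mul, hbdef, Algebra.commutes]
  have huι : ∀ a : A, u * ι a = ι (u0 • a) * u := by
    intro a
    rw [hudef]
    show (single u0 (1 : A)) * single 1 a = (single 1 (u0 • a)) * single u0 (1 : A)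
    rw [single_mul_single, single_mul_single, mul_one, one_mul, one_mul, one_smul,
      mul_one]
  have hc2 : c * (2 : CrossedProduct A G) = 1 := by
    rw [hcdef, show (2 : CrossedProduct A G) = ι (2 : A) from (map_ofNat ι 2).symm,
      ← map_mul, hb2, map_one]
  set F : CrossedProduct A G → CrossedProduct A G :=
    fun x => c * (π x + u * π (u * x)) with hFdef
  have hFmem : ∀ x, F x ∈ N := by
    intro x
    have h1 : u * π (u * x) ∈ N := by
      have h := N.smul_mem u (hπmem (u * x))
      rwa [smul_eq_mul] at h
    have h2 : π x + u * π (u * x) ∈ N := N.add_mem (hπmem x) h1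
    have h := N.smul_mem c h2
    rwa [smul_eq_mul] at h
  have hFadd : ∀ x y, F (x + y) = F x + F y := by
    intro x y
    simp only [hFdef, mul_add, map_add]
    abel
  have hF0 : F 0 = 0 := by
    simp only [hFdef, mul_zero, map_zero, add_zero, zero_add]
  have hFu : ∀ x, F (u * x) = u * F x := by
    intro x
    show c * (π (u * x) + u * π (u * (u * x)))
      = u * (c * (π x + u * π (u * x)))
    rw [← mul_assoc u c, ← hcu, mul_assoc c u, ← mul_assoc u u x, huu, one_mul,
      mul_add u, ← mul_assoc u u (π (u * x)), huu, one_mul, add_comm (u * π x)]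
  have hFι : ∀ (a : A) x, F (ι a * x) = ι a * F x := by
    intro a x
    show c * (π (ι a * x) + u * π (u * (ι a * x)))
      = ι a * (c * (π x + u * π (u * x)))
    rw [hπsmul, ← mul_assoc u (ι a) x, huι, mul_assoc (ι (u0 • a)) u x, hπsmul,
      ← mul_assoc u (ι (u0 • a)), huι, smul_smul, hu0, one_smul,
      mul_assoc (ι a) u (π (u * x)), ← mul_add, ← mul_assoc c (ι a), hca,
      mul_assoc (ι a) c]
  have hFlin : ∀ (s x : CrossedProduct A G), F (s * x) = s * F x := by
    intro s x
    induction s using induction_linear with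
    | h0 => rw [zero_mul, hF0, zero_mul]
    | hadd s t hs ht => rw [add_mul, hFadd, hs, ht, add_mul]
    | hsingle g a =>
      rcases hgen g with rfl | hg
      · rw [show (single 1 a : CrossedProduct A G) = ι a from rfl, hFι]
      · rw [hg]
        have hsg : (single u0 a : CrossedProduct A G) = ι a * u := by
          rw [hudef]
          show _ = (single 1 a : CrossedProduct A G) * single u0 1
          rw [single_mul_single, one_mul, one_smul, mul_one]
        rw [hsg, mul_assoc, hFι, hFu, mul_assoc]
  have hFproj : ∀ n ∈ N, F n = n := by
    intro n hn
    have hun : u * n ∈ N := by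
      have h := N.smul_mem u hn
      rwa [smul_eq_mul] at h
    show c * (π n + u * π (u * n)) = n
    rw [hπid n hn, hπid _ hun, ← mul_assoc u u n, huu, one_mul, ← two_mul,
      ← mul_assoc, hc2, one_mul]
  let f : CrossedProduct A G →ₗ[CrossedProduct A G] N :=
    { toFun := fun x => ⟨F x, hFmem x⟩
      map_add' := fun x y => Subtype.ext (hFadd x y)
      map_smul' := fun s x => Subtype.ext (hFlin s x) }
  exact ⟨LinearMap.ker f, LinearMap.isCompl_of_proj fun n => Subtype.ext (hFproj n n.2)⟩

open Paper in
/-- Let `A` be a finite-dimensional simple `ℝ`-algebra and `τ` a ring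
involution of `A`; let `G = ℤ/2` act on `A` via `τ`.  Then the twisted group ring `A⋊G`
is a semisimple ring. -/
theorem crossedProduct_of_involution_semisimple
    {A : Type*} [Ring A] [Algebra ℝ A] [FiniteDimensional ℝ A] [IsSimpleRing A]
    (τ : A ≃+* A) (hτ : ∀ a, τ (τ a) = a)
    [MulSemiringAction (Multiplicative (ZMod 2)) A]
    (hact : ∀ a : A, (Multiplicative.ofAdd (1 : ZMod 2)) • a = τ a) :
    IsSemisimpleRing (CrossedProduct A (Multiplicative (ZMod 2))) := by
  exact aux_crossed A (Multiplicative (ZMod 2))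
    (Multiplicative.ofAdd (1 : ZMod 2)) (by decide) (by decide)
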